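/- arXiv:math/0406148 — 2 statements merged into one kernel-verified Lean document; each statement's English description precedes it below -/
import Mathlib

section
/- For every PL knot K in ℝ³, the complement S² \ O_K of the set of good projection directions has measure zero with respect to the surface measure on the unit sphere S². -/
/- Common definitions: PL knots in ℝ³, projections, good (generic) directions,
crossing signs, Tait numbers, the spherical indicatrix and the writhe,
following Cimasoni, "Computing the writhe of a knot". -/

open scoped InnerProductSpace Topology
open MeasureTheory Metric Set

noncomputable section

/-- Euclidean three-space. -/
abbrev E3 : Type := EuclideanSpace ℝ (Fin 3)

/-- The unit sphere S² as a subset of ℝ³. -/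
def sphere2 : Set E3 := Metric.sphere (0 : E3) 1

/-- The spherical (surface) measure on the unit sphere S². -/
def sphMeasure : Measure (Metric.sphere (0 : E3) 1) := MeasureTheory.volume.toSphere

/-- The spherical area of (the trace on S² of) a subset of ℝ³. -/
def sphereArea (A : Set E3) : ℝ :=
  (sphMeasure {ξ : Metric.sphere (0 : E3) 1 | (ξ : E3) ∈ A}).toReal

/-- A closed polygonal curve in ℝ³, recorded by an `n`-periodic sequence of vertices;
the curve is the union of the segments joining consecutive vertices. -/
structure PLKnot where
  n : ℕ
  npos : 0 < n
  vtx : ℤ → E3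
  periodic : ∀ i : ℤ, vtx (i + n) = vtx i

namespace PLKnot

/-- The union of the segments of the polygonal curve. -/
def carrier (K : PLKnot) : Set E3 := ⋃ i : ℤ, segment ℝ (K.vtx i) (K.vtx (i + 1))

/-- The vertices of the polygonal curve. -/
def vertices (K : PLKnot) : Set E3 := Set.range K.vtx

/-- The interior points of `K`: points of `K` that are not vertices. -/
def interiorPts (K : PLKnot) : Set E3 := K.carrier \ K.vertices

/-- A polygonal curve is a PL knot if it is homeomorphic to the circle. -/
def IsKnot (K : PLKnot) : Prop := Nonempty (K.carrier ≃ₜ Circle)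

end PLKnot

/-- The orthogonal projection of ℝ³ onto the plane ξ^⊥ (ξ a unit vector),
with kernel the line ℝξ. -/
def proj (ξ x : E3) : E3 := x - ⟪x, ξ⟫_ℝ • ξ

namespace PLKnot

/-- The fiber of `proj ξ` over the point `proj ξ y`, intersected with `K`. -/
def fiber (K : PLKnot) (ξ y : E3) : Set E3 := {x ∈ K.carrier | proj ξ x = proj ξ y}

/-- `ξ` is a good (generic) projection direction for `K`: every fiber of `proj ξ`
meets `K` in the empty set, a single point, or exactly two interior points of `K`. -/
def IsGoodDir (K : PLKnot) (ξ : E3) : Prop :=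
  ∀ y : E3, K.fiber ξ y = ∅ ∨ (∃ p, K.fiber ξ y = {p}) ∨
    (∃ p q, p ≠ q ∧ p ∈ K.interiorPts ∧ q ∈ K.interiorPts ∧ K.fiber ξ y = {p, q})

/-- The set `O_K ⊆ S²` of good projection directions. -/
def goodDirs (K : PLKnot) : Set E3 := {ξ ∈ sphere2 | K.IsGoodDir ξ}

end PLKnot

/-- The determinant (triple product) of three vectors of ℝ³. -/
def det3 (u w ξ : E3) : ℝ :=
  Matrix.det !![u 0, u 1, u 2; w 0, w 1, w 2; ξ 0, ξ 1, ξ 2]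

namespace PLKnot

/-- An index of a segment of `K` containing the point `x` (chosen arbitrarily if there
are several; an interior point of an embedded polygonal curve lies on exactly one). -/
def segIdx (K : PLKnot) (x : E3) : ℤ :=
  Classical.epsilon fun i : ℤ => x ∈ segment ℝ (K.vtx i) (K.vtx (i + 1))

/-- The direction vector at a point `x` of `K`: the direction of the segment of `K`
through `x`, for the orientation of `K` given by the numbering of its vertices. -/
def dirAt (K : PLKnot) (x : E3) : E3 := K.vtx (K.segIdx x + 1) - K.vtx (K.segIdx x)

end PLKnot

/-- The sign of a double point whose upper strand has direction `u` and lower strand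
has direction `w`, for the projection along `ξ`: it is `+1` exactly when the oriented
upper strand has to be turned counterclockwise (in the plane ξ^⊥ oriented by ξ, i.e.
by an angle in (0, π)) to coincide with the oriented lower strand, which amounts to
`(u × w) · ξ > 0`, and `-1` otherwise. -/
def crossingSign (ξ u w : E3) : ℝ := Real.sign (det3 u w ξ)

namespace PLKnot

/-- The double points of the diagram of `K` in the direction `ξ`, recorded as the
ordered pairs `(p, q)` of distinct points of `K` with the same projection, the first
one (the upper strand) lying above the second one. -/
def crossingPairs (K : PLKnot) (ξ : E3) : Set (E3 × E3) :=
  {z : E3 × E3 | z.1 ∈ K.carrier ∧ z.2 ∈ K.carrier ∧ z.1 ≠ z.2 ∧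
    proj ξ z.1 = proj ξ z.2 ∧ ⟪z.2, ξ⟫_ℝ < ⟪z.1, ξ⟫_ℝ}

/-- The Tait number `T_K(ξ)` of `K` relative to `ξ`: the sum of the signs of all the
double points of the diagram of `K` in the direction `ξ`. -/
def tait (K : PLKnot) (ξ : E3) : ℝ :=
  ∑ᶠ z ∈ K.crossingPairs ξ, crossingSign ξ (K.dirAt z.1) (K.dirAt z.2)

/-- The Tait number, extended by `0` to non-generic directions. -/
def taitExt (K : PLKnot) (ξ : E3) : ℝ :=
  haveI := Classical.propDecidable (K.IsGoodDir ξ)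
  if K.IsGoodDir ξ then K.tait ξ else 0

/-- The unit direction `s_i ∈ S²` of the `i`-th segment of `K`. -/
def dirOf (K : PLKnot) (i : ℤ) : E3 :=
  ‖K.vtx (i + 1) - K.vtx i‖⁻¹ • (K.vtx (i + 1) - K.vtx i)

end PLKnot

/-- The great-circle arc on S² joining two unit vectors `a` and `b`: the radial
projection of the straight segment from `a` to `b`. -/
def arcSet (a b : E3) : Set E3 := (fun z : E3 => ‖z‖⁻¹ • z) '' (segment ℝ a b \ {0})

namespace PLKnot

/-- The curve `Γ ⊆ S²`: the union of the great-circle arcs joining the unit directions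
of consecutive segments of `K`. -/
def indHalf (K : PLKnot) : Set E3 := ⋃ i : ℤ, arcSet (K.dirOf i) (K.dirOf (i + 1))

/-- The spherical indicatrix `I = Γ ∪ (−Γ)` of `K`. -/
def indicatrix (K : PLKnot) : Set E3 := K.indHalf ∪ (fun x : E3 => -x) '' K.indHalf

/-- The writhe of `K`: the mean value over `ξ ∈ S²` of the Tait number `T_K(ξ)`. -/
def writhe (K : PLKnot) : ℝ :=
  (1 / (4 * Real.pi)) * ∫ ξ, K.taitExt ξ ∂sphMeasure

end PLKnot


/-! ### Auxiliary machinery for the proof -/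

section Aux

open scoped Pointwise

lemma det3_eq (p q r : E3) : det3 p q r =
    p 0 * (q 1 * r 2 - q 2 * r 1) - p 1 * (q 0 * r 2 - q 2 * r 0)
      + p 2 * (q 0 * r 1 - q 1 * r 0) := by
  simp [det3, Matrix.det_fin_three]; ring

lemma span2_ne_top (a b : E3) : Submodule.span ℝ {a, b} ≠ ⊤ := by
  classical
  intro h
  have h1 : Module.finrank ℝ E3 = 3 := by simp [finrank_euclideanSpace]
  have h2 : ({a, b} : Set E3).finrank ℝ ≤ ({a, b} : Finset E3).card := by
    have := finrank_span_finset_le_card (R := ℝ) ({a, b} : Finset E3)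
    simpa using this
  have h3 : ({a, b} : Finset E3).card ≤ 2 := Finset.card_insert_le _ _ |>.trans (by simp)
  rw [Set.finrank, h] at h2
  rw [finrank_top, h1] at h2
  omega

lemma sph_null {C : Set E3} (hm : MeasurableSet C)
    (hc : ∀ (r : ℝ), ∀ x ∈ C, r • x ∈ C) (h0 : MeasureTheory.volume C = 0) :
    sphMeasure {ξ : Metric.sphere (0 : E3) 1 | (ξ : E3) ∈ C} = 0 := by
  have hs : MeasurableSet {ξ : Metric.sphere (0 : E3) 1 | (ξ : E3) ∈ C} :=
    continuous_subtype_val.measurable hm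
  rw [sphMeasure, Measure.toSphere_apply' _ hs]
  have hsub : (Set.Ioo (0:ℝ) 1 •
      (Subtype.val '' {ξ : Metric.sphere (0 : E3) 1 | (ξ : E3) ∈ C})) ⊆ C := by
    rintro x ⟨r, hr, y, ⟨ξ, hξ, rfl⟩, rfl⟩
    exact hc r _ hξ
  rw [measure_mono_null hsub h0, mul_zero]

lemma null_of_cover {T : Set (Metric.sphere (0 : E3) 1)}
    (h : ∃ C : Set E3, MeasurableSet C ∧ (∀ (r : ℝ), ∀ x ∈ C, r • x ∈ C) ∧
      MeasureTheory.volume C = 0 ∧ ∀ ξ ∈ T, (ξ : E3) ∈ C) : sphMeasure T = 0 := by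
  obtain ⟨C, hm, hc, h0, hcov⟩ := h
  exact measure_mono_null (fun ξ hξ => hcov ξ hξ) (sph_null hm hc h0)

lemma submodule_cover {T : Set (Metric.sphere (0 : E3) 1)} (C : Submodule ℝ E3)
    (hne : C ≠ ⊤) (hcov : ∀ ξ ∈ T, (ξ : E3) ∈ C) : sphMeasure T = 0 := by
  refine null_of_cover ⟨(C : Set E3), (Submodule.closed_of_finiteDimensional C).measurableSet,
    fun r x hx => C.smul_mem r hx, ?_, hcov⟩
  exact MeasureTheory.Measure.addHaar_submodule _ _ hne

def mk3 (x y z : ℝ) : E3 := (WithLp.equiv 2 (Fin 3 → ℝ)).symm ![x, y, z]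

@[simp] lemma mk3_zero (x y z : ℝ) : mk3 x y z 0 = x := rfl
@[simp] lemma mk3_one (x y z : ℝ) : mk3 x y z 1 = y := rfl
@[simp] lemma mk3_two (x y z : ℝ) : mk3 x y z 2 = z := rfl

lemma coord_diff (l : Fin 3) : Differentiable ℝ (fun v : E3 => v l) :=
  (EuclideanSpace.proj (𝕜 := ℝ) l).differentiable

lemma subset_span2_of_coord1_eq_zero :
    {v : E3 | v 1 = 0} ⊆ (Submodule.span ℝ {EuclideanSpace.single 0 (1:ℝ),
      EuclideanSpace.single 2 (1:ℝ)} : Submodule ℝ E3) := by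
  intro v hv
  refine Submodule.mem_span_pair.2 ⟨v 0, v 2, ?_⟩
  ext l
  simp only [PiLp.add_apply, PiLp.smul_apply, smul_eq_mul, EuclideanSpace.single_apply]
  fin_cases l <;>
    simp_all [Set.mem_setOf_eq, Fin.zero_eta, Fin.mk_one, Fin.reduceFinMk, Fin.isValue]

lemma det3_dep {p q r : E3} (h : det3 p q r = 0) :
    ∃ v : Fin 3 → ℝ, v ≠ 0 ∧ v 0 • p + v 1 • q + v 2 • r = 0 := by
  obtain ⟨v, hv, hmul⟩ := Matrix.exists_vecMul_eq_zero_iff.2 h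
  refine ⟨v, hv, ?_⟩
  ext l
  have := congrFun hmul l
  simp [Matrix.vecMul, dotProduct, Fin.sum_univ_three] at this
  fin_cases l <;>
    simpa [Matrix.cons_val_zero, Matrix.cons_val_one] using this

lemma solve_third {v2 : ℝ} (hv2 : v2 ≠ 0) {v0 v1 : ℝ} {p q r : E3}
    (hdep : v0 • p + v1 • q + v2 • r = 0) : r ∈ Submodule.span ℝ {p, q} := by
  refine Submodule.mem_span_pair.2 ⟨-(v2⁻¹ * v0), -(v2⁻¹ * v1), ?_⟩
  have h2 : v2⁻¹ • (v0 • p + v1 • q + v2 • r) = v2⁻¹ • (0 : E3) := by rw [hdep]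
  rw [smul_zero] at h2
  have h3 : v2⁻¹ • (v2 • r) = v2⁻¹ • (v0 • p + v1 • q + v2 • r)
      - v2⁻¹ • (v0 • p + v1 • q) := by module
  rw [h2, smul_smul, inv_mul_cancel₀ hv2, one_smul] at h3
  rw [h3]; module

lemma pair_left (p q : E3) : p ∈ Submodule.span ℝ {p, q} :=
  Submodule.mem_span_pair.2 ⟨1, 0, by module⟩
lemma pair_right (p q : E3) : q ∈ Submodule.span ℝ {p, q} :=
  Submodule.mem_span_pair.2 ⟨0, 1, by module⟩

lemma dep_span (p q r : E3) (hdet : det3 p q r = 0) :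
    ∃ C : Submodule ℝ E3, C ≠ ⊤ ∧ ∀ m s t : ℝ, m • (p + t • r - s • q) ∈ C := by
  obtain ⟨v, hv, hdep⟩ := det3_dep hdet
  by_cases h2 : v 2 ≠ 0
  · refine ⟨Submodule.span ℝ {p, q}, span2_ne_top p q, fun m s t => ?_⟩
    have hr := solve_third h2 hdep
    have heq : m • (p + t • r - s • q) = m • p + (-(m * s)) • q + (m * t) • r := by module
    rw [heq]
    exact add_mem (add_mem (Submodule.smul_mem _ _ (pair_left p q))
      (Submodule.smul_mem _ _ (pair_right p q))) (Submodule.smul_mem _ _ hr)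
  · push_neg at h2
    by_cases h1 : v 1 ≠ 0
    · refine ⟨Submodule.span ℝ {p, r}, span2_ne_top p r, fun m s t => ?_⟩
      have hdep2 : v 0 • p + v 2 • r + v 1 • q = 0 :=
        (by module : v 0 • p + v 2 • r + v 1 • q = v 0 • p + v 1 • q + v 2 • r).trans hdep
      have hq := solve_third h1 hdep2
      have heq : m • (p + t • r - s • q) = m • p + (m * t) • r + (-(m * s)) • q := by module
      rw [heq]
      exact add_mem (add_mem (Submodule.smul_mem _ _ (pair_left p r))
        (Submodule.smul_mem _ _ (pair_right p r))) (Submodule.smul_mem _ _ hq)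
    · push_neg at h1
      have h0 : v 0 ≠ 0 := by
        intro h0
        apply hv
        funext i
        fin_cases i <;> simp_all
      refine ⟨Submodule.span ℝ {q, r}, span2_ne_top q r, fun m s t => ?_⟩
      have hdep2 : v 1 • q + v 2 • r + v 0 • p = 0 :=
        (by module : v 1 • q + v 2 • r + v 0 • p = v 0 • p + v 1 • q + v 2 • r).trans hdep
      have hp := solve_third h0 hdep2
      have heq : m • (p + t • r - s • q) = m • p + (-(m * s)) • q + (m * t) • r := by module
      rw [heq]
      exact add_mem (add_mem (Submodule.smul_mem _ _ hp)
        (Submodule.smul_mem _ _ (pair_left q r))) (Submodule.smul_mem _ _ (pair_right q r))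

lemma det3_cramer (x y u w al e : E3) :
    det3 u w al * det3 x y e = det3 e w al * det3 x y u + det3 u e al * det3 x y w
      + det3 u w e * det3 x y al := by
  simp only [det3_eq]; ring

lemma claim3 (al be u w e : E3) (hΔ1 : det3 al u w ≠ 0) (hΔ2 : det3 be u e ≠ 0)
    (hΔ3 : det3 (be - al) w e ≠ 0) (hB : det3 w be e = 0)
    (hC : -det3 u be e - det3 al u e = 0) (hD : -det3 w u e = 0) : False := by
  have hΔ : det3 u w al ≠ 0 := by
    intro h; apply hΔ1
    rw [show det3 al u w = det3 u w al by simp only [det3_eq]; ring, h]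
  have hR : det3 u w e = 0 := by
    have : det3 u w e = -det3 w u e := by simp only [det3_eq]; ring
    rw [this]; exact hD
  by_cases hQ : det3 u e al = 0
  · apply hΔ2
    have h2 := det3_cramer be u u w al e
    rw [hR, hQ, show det3 be u u = (0:ℝ) by simp only [det3_eq]; ring] at h2
    simp only [mul_zero, zero_mul, add_zero, zero_add] at h2
    exact (mul_eq_zero.1 h2).resolve_left hΔ
  by_cases hPz : det3 e w al = 0
  · apply hΔ3
    have h3 := det3_cramer (be - al) w u w al e
    rw [hR, hPz, show det3 (be - al) w w = (0:ℝ) by simp only [det3_eq]; ring] at h3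
    simp only [mul_zero, zero_mul, add_zero, zero_add] at h3
    exact (mul_eq_zero.1 h3).resolve_left hΔ
  · have h1 := det3_cramer w be u w al e
    rw [hR, hB, show det3 w be w = (0:ℝ) by simp only [det3_eq]; ring] at h1
    simp only [mul_zero, zero_mul, add_zero, zero_add] at h1
    have hwbu : det3 w be u = 0 := by
      have h1' : det3 e w al * det3 w be u = 0 := by linarith
      rcases mul_eq_zero.1 h1' with h | h
      · exact absurd h hPz
      · exact h
    have h5 := det3_cramer u be u w al e
    rw [hR, show det3 u be u = (0:ℝ) by simp only [det3_eq]; ring] at h5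
    simp only [mul_zero, zero_mul, add_zero, zero_add] at h5
    have h6 := det3_cramer al u u w al e
    rw [hR, show det3 al u u = (0:ℝ) by simp only [det3_eq]; ring] at h6
    simp only [mul_zero, zero_mul, add_zero, zero_add] at h6
    have hCC : det3 u be e = - det3 al u e := by linarith
    have hsum : det3 u e al * (det3 u be w + det3 al u w) = 0 := by
      have : det3 u w al * det3 u be e + det3 u w al * det3 al u e = 0 := by
        rw [hCC]; ring
      nlinarith [h5, h6]
    have h7 : det3 u be w + det3 al u w = 0 := by
      rcases mul_eq_zero.1 hsum with h | h
      · exact absurd h hQ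
      · exact h
    have h8 : det3 u be w = - det3 w be u := by simp only [det3_eq]; ring
    rw [h8, hwbu] at h7
    apply hΔ1
    linarith

lemma key_id (al be u w e ξ : E3) (s t r a b : ℝ)
    (h1 : al + t • w - s • u = a • ξ) (h2 : be + r • e - s • u = b • ξ) :
    det3 al be e + det3 w be e * t + (-det3 u be e - det3 al u e) * s
      + (-det3 w u e) * (s * t) = 0 := by
  have c1 : ∀ l : Fin 3, al l = a * ξ l - t * w l + s * u l := by
    intro l
    have h := congrArg (fun v : E3 => v l) h1
    simp only [PiLp.add_apply, PiLp.sub_apply, PiLp.smul_apply, smul_eq_mul] at h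
    linarith
  have c2 : ∀ l : Fin 3, be l = b * ξ l - r * e l + s * u l := by
    intro l
    have h := congrArg (fun v : E3 => v l) h2
    simp only [PiLp.add_apply, PiLp.sub_apply, PiLp.smul_apply, smul_eq_mul] at h
    linarith
  simp only [det3_eq]
  rw [c1 0, c1 1, c1 2, c2 0, c2 1, c2 2]
  ring

lemma analytic_null (al u w : E3) (Ac Bc Cc Dc : ℝ) (hBD : Bc ≠ 0 ∨ Dc ≠ 0) :
    ∃ C : Set E3, MeasurableSet C ∧ (∀ (r : ℝ), ∀ x ∈ C, r • x ∈ C) ∧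
      MeasureTheory.volume C = 0 ∧
      ∀ m s t : ℝ, Ac + Bc * t + Cc * s + Dc * (s * t) = 0 →
        m • (al + t • w - s • u) ∈ C := by
  set g : ℝ → ℝ := fun s => -(Ac + Cc * s) / (Bc + Dc * s) with hg
  set φ : E3 → ℝ := fun v => g (v 2) with hφ
  set F : E3 → E3 := fun v => (v 0) • (al + φ v • w - (v 2) • u) with hF
  set S : Set E3 := {v | v 1 = 0 ∧ Bc + Dc * (v 2) ≠ 0} with hS
  set s₁ : ℝ := -Bc / Dc with hs₁
  have hdiff : ∀ v ∈ S, DifferentiableAt ℝ F v := by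
    intro v hv
    have h0 := (coord_diff 0).differentiableAt (x := v)
    have h2 := (coord_diff 2).differentiableAt (x := v)
    have hden : Bc + Dc * (v 2) ≠ 0 := hv.2
    have hφd : DifferentiableAt ℝ φ v := by
      have hgd : DifferentiableAt ℝ g (v 2) := by
        refine DifferentiableAt.div ?_ ?_ hden
        · exact ((differentiableAt_const _).add
            ((differentiableAt_const _).mul differentiableAt_id)).neg
        · exact (differentiableAt_const _).add ((differentiableAt_const _).mul differentiableAt_id)
      exact hgd.comp v h2
    exact h0.smul (((differentiableAt_const al).add (hφd.smul (differentiableAt_const w))).sub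
      (h2.smul (differentiableAt_const u)))
  have hSnull : MeasureTheory.volume S = 0 := by
    refine measure_mono_null (fun v hv => subset_span2_of_coord1_eq_zero hv.1) ?_
    exact MeasureTheory.Measure.addHaar_submodule _ _ (span2_ne_top _ _)
  have hFnull : MeasureTheory.volume (F '' S) = 0 :=
    MeasureTheory.addHaar_image_eq_zero_of_differentiableOn_of_addHaar_eq_zero
      MeasureTheory.volume (fun v hv => (hdiff v hv).differentiableWithinAt) hSnull
  set P : ℕ → Set E3 := fun n =>
    ({v : E3 | v 1 = 0} ∩ Metric.closedBall 0 n) ∩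
      {v | 1/(n+1 : ℝ) ≤ |Bc + Dc * (v 2)|} with hP
  have hPc : ∀ n, IsCompact (P n) := by
    intro n
    apply IsCompact.of_isClosed_subset (isCompact_closedBall (0:E3) n)
    · refine IsClosed.inter (IsClosed.inter ?_ Metric.isClosed_closedBall) ?_
      · exact isClosed_eq (coord_diff 1).continuous continuous_const
      · exact isClosed_le continuous_const (continuous_const.add
          (continuous_const.mul (coord_diff 2).continuous)).abs
    · exact fun v hv => hv.1.2
  have hPS : ∀ n, P n ⊆ S := by
    intro n v hv
    refine ⟨hv.1.1, fun h => ?_⟩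
    have h2 := hv.2
    simp only [Set.mem_setOf_eq, h, abs_zero] at h2
    have hp : (0:ℝ) < 1/(n+1:ℝ) := by positivity
    linarith
  have hcup : F '' S = ⋃ n, F '' (P n) := by
    apply Set.Subset.antisymm
    · rintro x ⟨v, hv, rfl⟩
      obtain ⟨n1, hn1⟩ := exists_nat_ge ‖v‖
      have hpos : 0 < |Bc + Dc * v 2| := abs_pos.2 hv.2
      obtain ⟨n2, hn2⟩ := exists_nat_one_div_lt hpos
      refine Set.mem_iUnion.2 ⟨max n1 n2, ⟨v, ⟨⟨hv.1, ?_⟩, ?_⟩, rfl⟩⟩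
      · simp only [Metric.mem_closedBall, dist_zero_right]
        exact hn1.trans (by exact_mod_cast Nat.cast_le.2 (le_max_left _ _))
      · refine le_trans (one_div_le_one_div_of_le (by positivity) ?_) hn2.le
        push_cast [Nat.cast_max]
        have := le_max_right (n1:ℝ) (n2:ℝ)
        linarith
    · exact Set.iUnion_subset fun n => Set.image_mono (hPS n)
  have hFmeas : MeasurableSet (F '' S) := by
    rw [hcup]
    refine MeasurableSet.iUnion fun n => ?_
    refine ((hPc n).image_of_continuousOn ?_).measurableSet
    exact fun v hv => ((hdiff v (hPS n hv)).continuousAt).continuousWithinAt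
  refine ⟨F '' S ∪ (Submodule.span ℝ {al - s₁ • u, w} : Submodule ℝ E3), ?_, ?_, ?_, ?_⟩
  · exact hFmeas.union (Submodule.closed_of_finiteDimensional _).measurableSet
  · rintro r x (⟨v, hv, rfl⟩ | hx)
    · left
      refine ⟨mk3 (r * v 0) (v 1) (v 2), ⟨?_, ?_⟩, ?_⟩
      · simpa using hv.1
      · simpa using hv.2
      · show (mk3 (r * v 0) (v 1) (v 2) 0) • (al + g (mk3 (r * v 0) (v 1) (v 2) 2) • w
            - (mk3 (r * v 0) (v 1) (v 2) 2) • u) = r • F v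
        simp only [mk3_zero, mk3_two]
        rw [hF]
        simp only [hφ]
        rw [mul_smul]
    · right
      exact Submodule.smul_mem _ r hx
  · refine measure_union_null hFnull ?_
    exact MeasureTheory.Measure.addHaar_submodule _ _ (span2_ne_top _ _)
  · intro m s t heq
    by_cases hden : Bc + Dc * s = 0
    · right
      have hDc : Dc ≠ 0 := by
        rcases hBD with hB | hD
        · intro hD0; rw [hD0] at hden; simp at hden; exact hB hden
        · exact hD
      have hs : s = s₁ := by
        rw [hs₁]; field_simp; linarith
      rw [hs]
      exact Submodule.mem_span_pair.2 ⟨m, m * t, by module⟩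
    · left
      have hts : g s = t := by
        rw [hg]
        rw [div_eq_iff hden]
        ring_nf
        nlinarith [heq]
      refine ⟨mk3 m 0 s, ⟨by simp, by simpa using hden⟩, ?_⟩
      show (mk3 m 0 s 0) • (al + g (mk3 m 0 s 2) • w - (mk3 m 0 s 2) • u) = _
      simp only [mk3_zero, mk3_two, hts]

/-- Directions realized by a segment point paired with the vertex `vtx mi`. -/
def badVert (K : PLKnot) (mi j : ℤ) : Set (Metric.sphere (0 : E3) 1) :=
  {ξ | ∃ s c : ℝ,
    K.vtx j + s • (K.vtx (j+1) - K.vtx j) ≠ K.vtx mi ∧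
    K.vtx j + s • (K.vtx (j+1) - K.vtx j) - K.vtx mi = c • (ξ : E3)}

/-- Directions realized by three distinct collinear points on segments `i`, `j`, `k`. -/
def badTriple (K : PLKnot) (i j k : ℤ) : Set (Metric.sphere (0 : E3) 1) :=
  {ξ | ∃ s t r a b : ℝ, a ≠ 0 ∧ b ≠ 0 ∧ b - a ≠ 0 ∧
    (K.vtx j + t • (K.vtx (j+1) - K.vtx j)) - (K.vtx i + s • (K.vtx (i+1) - K.vtx i))
      = a • (ξ : E3) ∧
    (K.vtx k + r • (K.vtx (k+1) - K.vtx k)) - (K.vtx i + s • (K.vtx (i+1) - K.vtx i))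
      = b • (ξ : E3)}

lemma badVert_null (K : PLKnot) (mi j : ℤ) : sphMeasure (badVert K mi j) = 0 := by
  refine submodule_cover (Submodule.span ℝ {K.vtx j - K.vtx mi, K.vtx (j+1) - K.vtx j}) 
    (span2_ne_top _ _) ?_
  rintro ξ ⟨s, c, hne, heq⟩
  have hc : c ≠ 0 := by
    intro h0
    rw [h0, zero_smul, sub_eq_zero] at heq
    exact hne heq
  refine Submodule.mem_span_pair.2 ⟨c⁻¹, c⁻¹ * s, ?_⟩
  have h1 : c⁻¹ • (K.vtx j - K.vtx mi) + (c⁻¹ * s) • (K.vtx (j+1) - K.vtx j)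
      = c⁻¹ • (K.vtx j + s • (K.vtx (j+1) - K.vtx j) - K.vtx mi) := by module
  rw [h1, heq, smul_smul, inv_mul_cancel₀ hc, one_smul]

lemma badTriple_null (K : PLKnot) (i j k : ℤ) : sphMeasure (badTriple K i j k) = 0 := by
  set u : E3 := K.vtx (i+1) - K.vtx i with hu
  set w : E3 := K.vtx (j+1) - K.vtx j with hw
  set e : E3 := K.vtx (k+1) - K.vtx k with he
  set al : E3 := K.vtx j - K.vtx i with hal
  set be : E3 := K.vtx k - K.vtx i with hbe
  have hmem : ∀ ξ ∈ badTriple K i j k, ∃ s t r a b : ℝ, a ≠ 0 ∧ b ≠ 0 ∧ b - a ≠ 0 ∧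
      al + t • w - s • u = a • (ξ : E3) ∧ be + r • e - s • u = b • (ξ : E3) := by
    rintro ξ ⟨s, t, r, a, b, ha, hb, hba, h1, h2⟩
    refine ⟨s, t, r, a, b, ha, hb, hba, ?_, ?_⟩
    · refine Eq.trans ?_ h1; module
    · refine Eq.trans ?_ h2; module
  by_cases hΔ1 : det3 al u w = 0
  · obtain ⟨C, hC, hCmem⟩ := dep_span al u w hΔ1
    refine submodule_cover C hC ?_
    intro ξ hξ
    obtain ⟨s, t, r, a, b, ha, hb, hba, h1, h2⟩ := hmem ξ hξ
    have : (ξ : E3) = a⁻¹ • (al + t • w - s • u) := by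
      rw [h1, smul_smul, inv_mul_cancel₀ ha, one_smul]
    rw [this]
    exact hCmem a⁻¹ s t
  by_cases hΔ2 : det3 be u e = 0
  · obtain ⟨C, hC, hCmem⟩ := dep_span be u e hΔ2
    refine submodule_cover C hC ?_
    intro ξ hξ
    obtain ⟨s, t, r, a, b, ha, hb, hba, h1, h2⟩ := hmem ξ hξ
    have : (ξ : E3) = b⁻¹ • (be + r • e - s • u) := by
      rw [h2, smul_smul, inv_mul_cancel₀ hb, one_smul]
    rw [this]
    exact hCmem b⁻¹ s r
  by_cases hΔ3 : det3 (be - al) w e = 0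
  · obtain ⟨C, hC, hCmem⟩ := dep_span (be - al) w e hΔ3
    refine submodule_cover C hC ?_
    intro ξ hξ
    obtain ⟨s, t, r, a, b, ha, hb, hba, h1, h2⟩ := hmem ξ hξ
    have hdiff : (be - al) + r • e - t • w = (b - a) • (ξ : E3) := by
      rw [sub_smul, ← h1, ← h2]; module
    have : (ξ : E3) = (b - a)⁻¹ • ((be - al) + r • e - t • w) := by
      rw [hdiff, smul_smul, inv_mul_cancel₀ hba, one_smul]
    rw [this]
    exact hCmem (b - a)⁻¹ t r
  · -- all three determinants nonzero
    have hclaim : ¬(det3 w be e = 0 ∧ (-det3 u be e - det3 al u e) = 0 ∧ -det3 w u e = 0) := by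
      rintro ⟨hB, hC, hD⟩
      exact claim3 al be u w e hΔ1 hΔ2 hΔ3 hB hC hD
    by_cases hBD : det3 w be e = 0 ∧ -det3 w u e = 0
    · -- B = D = 0, so C ≠ 0 : s is determined
      have hCc : (-det3 u be e - det3 al u e) ≠ 0 := by
        intro h; exact hclaim ⟨hBD.1, h, hBD.2⟩
      set s₀ : ℝ := -(det3 al be e) / (-det3 u be e - det3 al u e) with hs₀
      refine submodule_cover (Submodule.span ℝ {al - s₀ • u, w}) (span2_ne_top _ _) ?_
      intro ξ hξ
      obtain ⟨s, t, r, a, b, ha, hb, hba, h1, h2⟩ := hmem ξ hξ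
      have hkey := key_id al be u w e ξ s t r a b h1 h2
      rw [hBD.1, hBD.2] at hkey
      have hs : s = s₀ := by
        rw [hs₀]
        field_simp
        nlinarith [hkey]
      rw [hs] at h1
      have : (ξ : E3) = a⁻¹ • (al + t • w - s₀ • u) := by
        rw [h1, smul_smul, inv_mul_cancel₀ ha, one_smul]
      rw [this]
      refine Submodule.mem_span_pair.2 ⟨a⁻¹, a⁻¹ * t, by module⟩
    · -- B ≠ 0 or D ≠ 0 : analytic case
      have hBD' : det3 w be e ≠ 0 ∨ -det3 w u e ≠ 0 := by
        by_contra h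
        push_neg at h
        exact hBD ⟨h.1, h.2⟩
      obtain ⟨C, hmeas, hcone, hnull, hcov⟩ :=
        analytic_null al u w (det3 al be e) (det3 w be e)
          (-det3 u be e - det3 al u e) (-det3 w u e) hBD'
      refine null_of_cover ⟨C, hmeas, hcone, hnull, ?_⟩
      intro ξ hξ
      obtain ⟨s, t, r, a, b, ha, hb, hba, h1, h2⟩ := hmem ξ hξ
      have hkey := key_id al be u w e ξ s t r a b h1 h2
      have : (ξ : E3) = a⁻¹ • (al + t • w - s • u) := by
        rw [h1, smul_smul, inv_mul_cancel₀ ha, one_smul]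
      rw [this]
      exact hcov a⁻¹ s t hkey

lemma fiber_diff {K : PLKnot} {ξ y p q : E3} (hp : p ∈ K.fiber ξ y) (hq : q ∈ K.fiber ξ y) :
    q - p = (⟪q, ξ⟫_ℝ - ⟪p, ξ⟫_ℝ) • ξ := by
  have h : p - ⟪p, ξ⟫_ℝ • ξ = q - ⟪q, ξ⟫_ℝ • ξ := by
    have h1 : proj ξ p = proj ξ q := hp.2.trans hq.2.symm
    exact h1
  have h2 : q - p - (⟪q, ξ⟫_ℝ • ξ - ⟪p, ξ⟫_ℝ • ξ)
      = -((p - ⟪p, ξ⟫_ℝ • ξ) - (q - ⟪q, ξ⟫_ℝ • ξ)) := by module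
  rw [h, sub_self, neg_zero] at h2
  have h3 := sub_eq_zero.1 h2
  rw [h3, sub_smul]

lemma carrier_param {K : PLKnot} {x : E3} (hx : x ∈ K.carrier) :
    ∃ (i : ℤ) (s : ℝ), x = K.vtx i + s • (K.vtx (i+1) - K.vtx i) := by
  obtain ⟨i, hi⟩ := Set.mem_iUnion.1 hx
  rw [segment_eq_image'] at hi
  obtain ⟨s, _, hs⟩ := hi
  exact ⟨i, s, hs.symm⟩

end Aux

/-- For every PL knot `K` in ℝ³, the complement `S² \ O_K` of the set
of good projection directions has measure zero with respect to the surface measure on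
the unit sphere S². -/
theorem bad_projections_measure_zero (K : PLKnot) (hK : K.IsKnot) :
    sphMeasure {ξ : Metric.sphere (0 : E3) 1 | ¬ K.IsGoodDir ξ} = 0 := by
  have hsub : {ξ : Metric.sphere (0 : E3) 1 | ¬ K.IsGoodDir ξ} ⊆
      (⋃ p : ℤ × ℤ, badVert K p.1 p.2) ∪ ⋃ p : ℤ × ℤ × ℤ, badTriple K p.1 p.2.1 p.2.2 := by
    intro ξ hξ
    simp only [Set.mem_setOf_eq, PLKnot.IsGoodDir, not_forall] at hξ
    obtain ⟨y, hy⟩ := hξ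
    rw [not_or, not_or] at hy
    obtain ⟨h1, h2, h3⟩ := hy
    obtain ⟨x1, hx1⟩ := Set.nonempty_iff_ne_empty.2 h1
    have hx2 : ∃ x2 ∈ K.fiber (↑ξ) y, x2 ≠ x1 := by
      by_contra hcon
      push_neg at hcon
      exact h2 ⟨x1, Set.eq_singleton_iff_unique_mem.2 ⟨hx1, hcon⟩⟩
    obtain ⟨x2, hx2, hx21⟩ := hx2
    by_cases hthree : ∃ x3 ∈ K.fiber (↑ξ) y, x3 ≠ x1 ∧ x3 ≠ x2
    · -- three distinct points: triple case
      obtain ⟨x3, hx3, hx31, hx32⟩ := hthree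
      obtain ⟨i, s, hxi⟩ := carrier_param hx1.1
      obtain ⟨j, t, hxj⟩ := carrier_param hx2.1
      obtain ⟨k, r, hxk⟩ := carrier_param hx3.1
      have ha : x2 - x1 = (⟪x2, (ξ:E3)⟫_ℝ - ⟪x1, (ξ:E3)⟫_ℝ) • (ξ:E3) := fiber_diff hx1 hx2
      have hb : x3 - x1 = (⟪x3, (ξ:E3)⟫_ℝ - ⟪x1, (ξ:E3)⟫_ℝ) • (ξ:E3) := fiber_diff hx1 hx3
      set a := ⟪x2, (ξ:E3)⟫_ℝ - ⟪x1, (ξ:E3)⟫_ℝ with haa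
      set b := ⟪x3, (ξ:E3)⟫_ℝ - ⟪x1, (ξ:E3)⟫_ℝ with hbb
      have ha0 : a ≠ 0 := by
        intro h0
        rw [h0, zero_smul, sub_eq_zero] at ha
        exact hx21 ha
      have hb0 : b ≠ 0 := by
        intro h0
        rw [h0, zero_smul, sub_eq_zero] at hb
        exact hx31 hb
      have hba : b - a ≠ 0 := by
        intro h0
        have : x3 - x2 = (b - a) • (ξ:E3) := by
          rw [sub_smul, ← ha, ← hb]; module
        rw [h0, zero_smul, sub_eq_zero] at this
        exact hx32 this
      right
      refine Set.mem_iUnion.2 ⟨⟨i, j, k⟩, s, t, r, a, b, ha0, hb0, hba, ?_, ?_⟩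
      · rw [← hxi, ← hxj]; exact ha
      · rw [← hxi, ← hxk]; exact hb
    · -- exactly two points: one is a vertex
      push_neg at hthree
      have hFeq : K.fiber (↑ξ) y = {x1, x2} := by
        apply Set.Subset.antisymm
        · intro z hz
          rcases eq_or_ne z x1 with h | h
          · exact Or.inl h
          · exact Or.inr (hthree z hz h)
        · rintro z (rfl | rfl)
          · exact hx1
          · exact hx2
      have hnotint : x1 ∉ K.interiorPts ∨ x2 ∉ K.interiorPts := by
        by_contra hcon
        push_neg at hcon
        exact h3 ⟨x1, x2, hx21.symm, hcon.1, hcon.2, hFeq⟩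
      -- get the vertex v and the other point x'
      obtain ⟨v, x', hv, hx', hvx, hvf, hxf⟩ :
          ∃ v x' : E3, v ∈ K.vertices ∧ x' ∈ K.carrier ∧ x' ≠ v ∧
            v ∈ K.fiber (↑ξ) y ∧ x' ∈ K.fiber (↑ξ) y := by
        rcases hnotint with h | h
        · have : x1 ∈ K.vertices := by
            by_contra hnv
            exact h ⟨hx1.1, hnv⟩
          exact ⟨x1, x2, this, hx2.1, hx21, hx1, hx2⟩
        · have : x2 ∈ K.vertices := by
            by_contra hnv
            exact h ⟨hx2.1, hnv⟩
          exact ⟨x2, x1, this, hx1.1, fun hh => hx21 hh.symm, hx2, hx1⟩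
      obtain ⟨mi, hmi⟩ := hv
      obtain ⟨j, s, hxj⟩ := carrier_param hx'
      have hc : x' - v = (⟪x', (ξ:E3)⟫_ℝ - ⟪v, (ξ:E3)⟫_ℝ) • (ξ:E3) := fiber_diff hvf hxf
      left
      refine Set.mem_iUnion.2 ⟨⟨mi, j⟩, s, ⟪x', (ξ:E3)⟫_ℝ - ⟪v, (ξ:E3)⟫_ℝ, ?_, ?_⟩
      · rw [← hxj, hmi]; exact hvx
      · rw [← hxj, hmi]; exact hc
  refine measure_mono_null hsub (measure_union_null ?_ ?_)
  · exact measure_iUnion_null fun p => badVert_null K p.1 p.2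
  · exact measure_iUnion_null fun p => badTriple_null K p.1 p.2.1 p.2.2
end
end

section
/- Let K be a PL knot in ℝ³, and extend the Tait number to a function T_K : S² → ℝ by setting T_K(ξ) = 0 for ξ ∉ O_K. Then T_K is integrable on S² with respect to the spherical surface measure. -/
/- Common definitions: PL knots in ℝ³, projections, good (generic) directions,
crossing signs, Tait numbers, the spherical indicatrix and the writhe,
following Cimasoni, "Computing the writhe of a knot". -/

open scoped InnerProductSpace Topology
open MeasureTheory Metric Set

noncomputable section

section Aux

open Function

namespace PLKnot

variable (K : PLKnot)

/-- Auxiliary: the `i`-th segment of `K`. -/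
def seg (i : ℤ) : Set E3 := segment ℝ (K.vtx i) (K.vtx (i + 1))

lemma vtx_add_mul (i k : ℤ) : K.vtx (i + k * K.n) = K.vtx i := by
  induction k using Int.induction_on with
  | zero => simp
  | succ k ih =>
      have h := K.periodic (i + k * K.n)
      rw [show i + ((k : ℤ) + 1) * K.n = i + (k : ℤ) * K.n + K.n by ring, h, ih]
  | pred k ih =>
      have h := K.periodic (i + (-(k : ℤ) - 1) * K.n)
      rw [show i + (-(k : ℤ) - 1) * K.n + (K.n : ℤ) = i + (-(k : ℤ)) * K.n by ring] at h
      rw [← h]; exact ih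

lemma vtx_emod (i : ℤ) : K.vtx (i % K.n) = K.vtx i := by
  conv_rhs => rw [show i = i % K.n + (i / K.n) * K.n by
    rw [mul_comm]; exact (Int.emod_add_mul_ediv i K.n).symm]
  rw [vtx_add_mul]

lemma seg_emod (i : ℤ) : K.seg (i % K.n) = K.seg i := by
  have h2 : K.vtx (i % K.n + 1) = K.vtx (i + 1) := by
    rw [show i + 1 = (i % K.n + 1) + (i / K.n) * K.n by
      rw [mul_comm]; have := Int.emod_add_mul_ediv i K.n; omega]
    rw [vtx_add_mul]
  unfold seg
  rw [vtx_emod, h2]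

/-- The canonical index in `Fin n` associated with `i : ℤ`. -/
def finIdx (i : ℤ) : Fin K.n := ⟨(i % K.n).toNat, by
  have hn : (0 : ℤ) < K.n := by exact_mod_cast K.npos
  have h1 : 0 ≤ i % K.n := Int.emod_nonneg i hn.ne'
  have h2 : i % K.n < K.n := Int.emod_lt_of_pos i hn
  omega⟩

lemma coe_finIdx (i : ℤ) : ((K.finIdx i : Fin K.n) : ℤ) = i % K.n := by
  have hn : (0 : ℤ) < K.n := by exact_mod_cast K.npos
  have h1 : 0 ≤ i % K.n := Int.emod_nonneg i hn.ne'
  simp only [finIdx]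
  omega

open Classical in
/-- The "pattern" of a point: the set of segments of `K` containing it. -/
def pat (p : E3) : Finset (Fin K.n) := Finset.univ.filter fun j => p ∈ K.seg (j : ℤ)

lemma mem_pat {p : E3} {j : Fin K.n} : j ∈ K.pat p ↔ p ∈ K.seg (j : ℤ) := by
  classical
  simp [pat]

lemma mem_seg_iff_finIdx {p : E3} (i : ℤ) : p ∈ K.seg i ↔ K.finIdx i ∈ K.pat p := by
  rw [mem_pat, coe_finIdx, seg_emod]

lemma segIdx_eq_of_pat_eq {p q : E3} (h : K.pat p = K.pat q) : K.segIdx p = K.segIdx q := by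
  unfold segIdx
  congr 1
  funext i
  apply propext
  have hp := K.mem_seg_iff_finIdx (p := p) i
  have hq := K.mem_seg_iff_finIdx (p := q) i
  show p ∈ K.seg i ↔ q ∈ K.seg i
  rw [hp, hq, h]

lemma dirAt_eq_of_pat_eq {p q : E3} (h : K.pat p = K.pat q) : K.dirAt p = K.dirAt q := by
  unfold dirAt
  rw [K.segIdx_eq_of_pat_eq h]

lemma mem_carrier_iff {p : E3} : p ∈ K.carrier ↔ ∃ i : ℤ, p ∈ K.seg i := Set.mem_iUnion

lemma mem_seg_segIdx {p : E3} (hp : p ∈ K.carrier) : p ∈ K.seg (K.segIdx p) :=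
  Classical.epsilon_spec (K.mem_carrier_iff.1 hp)

lemma pat_nonempty {p : E3} (hp : p ∈ K.carrier) : (K.pat p).Nonempty :=
  ⟨K.finIdx (K.segIdx p), (K.mem_seg_iff_finIdx _).1 (K.mem_seg_segIdx hp)⟩

lemma carrier_eq_iUnion_fin : K.carrier = ⋃ j : Fin K.n, K.seg (j : ℤ) := by
  ext p
  rw [mem_carrier_iff, Set.mem_iUnion]
  constructor
  · rintro ⟨i, hi⟩
    exact ⟨K.finIdx i, by rw [coe_finIdx, seg_emod]; exact hi⟩
  · rintro ⟨j, hj⟩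
    exact ⟨(j : ℤ), hj⟩

lemma isCompact_seg (i : ℤ) : IsCompact (K.seg i) := by
  rw [seg, segment_eq_image']
  exact isCompact_Icc.image (by fun_prop)

lemma isClosed_seg (i : ℤ) : IsClosed (K.seg i) := (K.isCompact_seg i).isClosed

lemma isCompact_carrier : IsCompact K.carrier := by
  rw [carrier_eq_iUnion_fin]
  exact isCompact_iUnion fun j => K.isCompact_seg _

lemma vertices_finite : K.vertices.Finite := by
  have hsub : K.vertices ⊆ K.vtx '' Set.Ico (0 : ℤ) K.n := by
    rintro _ ⟨i, rfl⟩
    have hn : (0 : ℤ) < K.n := by exact_mod_cast K.npos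
    exact ⟨i % K.n, ⟨Int.emod_nonneg i hn.ne', Int.emod_lt_of_pos i hn⟩, K.vtx_emod i⟩
  exact ((Set.finite_Ico _ _).image _).subset hsub

lemma vertices_subset_carrier : K.vertices ⊆ K.carrier := by
  rintro _ ⟨i, rfl⟩
  exact K.mem_carrier_iff.2 ⟨i, left_mem_segment ℝ _ _⟩

end PLKnot

end Aux

section Aux2

open Function

lemma det3_zero_coeffs {u w ξ : E3} (h : det3 u w ξ ≠ 0) {a b c : ℝ}
    (habc : a • u + b • w + c • ξ = 0) : a = 0 ∧ b = 0 ∧ c = 0 := by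
  classical
  set M : Matrix (Fin 3) (Fin 3) ℝ :=
    !![u 0, u 1, u 2; w 0, w 1, w 2; ξ 0, ξ 1, ξ 2] with hM
  have hdet : M.det ≠ 0 := h
  have h0 : ∀ j : Fin 3, a * u j + b * w j + c * ξ j = 0 := by
    intro j
    have h00 : (a • u + b • w + c • ξ) j = (0 : E3) j := by rw [habc]
    simpa [PiLp.add_apply, PiLp.smul_apply, smul_eq_mul] using h00
  have hv : Matrix.vecMul ![a, b, c] M = 0 := by
    funext j
    fin_cases j <;>
      · simp [hM, Matrix.vecMul, dotProduct, Fin.sum_univ_three]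
        linarith [h0 0, h0 1, h0 2]
  have hz := Matrix.eq_zero_of_vecMul_eq_zero hdet hv
  refine ⟨?_, ?_, ?_⟩
  · have := congrFun hz 0; simpa using this
  · have := congrFun hz 1; simpa using this
  · have := congrFun hz 2; simpa using this

lemma sub_eq_of_proj_eq {ξ p q : E3} (h : proj ξ p = proj ξ q) :
    p - q = (⟪p, ξ⟫_ℝ - ⟪q, ξ⟫_ℝ) • ξ := by
  unfold proj at h
  rw [sub_smul]
  rw [sub_eq_sub_iff_sub_eq_sub]
  exact h

namespace PLKnot

variable (K : PLKnot)

lemma crossing_unique {ξ : E3} {p q p' q' : E3}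
    (h : (p, q) ∈ K.crossingPairs ξ) (h' : (p', q') ∈ K.crossingPairs ξ)
    (h1 : K.pat p = K.pat p') (h2 : K.pat q = K.pat q')
    (hd : det3 (K.dirAt p) (K.dirAt q) ξ ≠ 0) : p = p' ∧ q = q' := by
  obtain ⟨hpc, hqc, -, hproj, -⟩ := h
  obtain ⟨hpc', hqc', -, hproj', -⟩ := h'
  have hm := K.segIdx_eq_of_pat_eq h1
  have hl := K.segIdx_eq_of_pat_eq h2
  set m := K.segIdx p with hm2
  set l := K.segIdx q with hl2
  have hsegp : p ∈ K.seg m := K.mem_seg_segIdx hpc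
  have hsegp' : p' ∈ K.seg m := by rw [hm]; exact K.mem_seg_segIdx hpc'
  have hsegq : q ∈ K.seg l := K.mem_seg_segIdx hqc
  have hsegq' : q' ∈ K.seg l := by rw [hl]; exact K.mem_seg_segIdx hqc'
  rw [seg, segment_eq_image'] at hsegp hsegp' hsegq hsegq'
  obtain ⟨s, -, hs⟩ := hsegp
  obtain ⟨s', -, hs'⟩ := hsegp'
  obtain ⟨t, -, ht⟩ := hsegq
  obtain ⟨t', -, ht'⟩ := hsegq'
  simp only at hs hs' ht ht'
  set e := K.dirAt p with he
  set f := K.dirAt q with hf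
  have hde : e = K.vtx (m + 1) - K.vtx m := rfl
  have hdf : f = K.vtx (l + 1) - K.vtx l := rfl
  clear_value m l
  have hse : s • e - s' • e = p - p' := by
    rw [hde, ← hs, ← hs']; abel
  have htf : t' • f - t • f = q' - q := by
    rw [hdf, ← ht, ← ht']; abel
  have e1 : p - q = (⟪p, ξ⟫_ℝ - ⟪q, ξ⟫_ℝ) • ξ := sub_eq_of_proj_eq hproj
  have e2 : p' - q' = (⟪p', ξ⟫_ℝ - ⟪q', ξ⟫_ℝ) • ξ := sub_eq_of_proj_eq hproj'
  have hmain : (s - s') • e + (t' - t) • f +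
      ((⟪p', ξ⟫_ℝ - ⟪q', ξ⟫_ℝ) - (⟪p, ξ⟫_ℝ - ⟪q, ξ⟫_ℝ)) • ξ = 0 := by
    rw [sub_smul, sub_smul, sub_smul, hse, htf, ← e1, ← e2]
    abel
  obtain ⟨hss, htt, -⟩ := det3_zero_coeffs hd hmain
  have hss' : s = s' := by linarith [sub_eq_zero.mp hss]
  have htt' : t = t' := by
    have := sub_eq_zero.mp htt; linarith
  constructor
  · rw [← hs, ← hs', hss']
  · rw [← ht, ← ht', htt']

lemma support_finite (ξ : E3) :
    (K.crossingPairs ξ ∩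
      Function.support (fun z : E3 × E3 => crossingSign ξ (K.dirAt z.1) (K.dirAt z.2))).Finite := by
  apply Set.Finite.of_finite_image (f := fun z : E3 × E3 => (K.pat z.1, K.pat z.2))
  · exact Set.toFinite _
  · rintro ⟨p, q⟩ ⟨hcp, hsupp⟩ ⟨p', q'⟩ ⟨hcp', hsupp'⟩ heq
    simp only [Prod.mk.injEq] at heq
    have hd : det3 (K.dirAt p) (K.dirAt q) ξ ≠ 0 := by
      intro h0
      apply hsupp
      simp only [crossingSign, h0, Real.sign_zero]
    obtain ⟨h1, h2⟩ := K.crossing_unique hcp hcp' heq.1 heq.2 hd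
    simp [h1, h2]

open Classical in
/-- The common direction vector of the points in the pattern class `S`. -/
def dirClass (S : Finset (Fin K.n)) : E3 :=
  if h : ∃ p, K.pat p = S then K.dirAt h.choose else 0

lemma dirAt_eq_dirClass {p : E3} {S : Finset (Fin K.n)} (h : K.pat p = S) :
    K.dirAt p = K.dirClass S := by
  rw [dirClass, dif_pos ⟨p, h⟩]
  exact K.dirAt_eq_of_pat_eq (h.trans (⟨p, h⟩ : ∃ p, K.pat p = S).choose_spec.symm)

/-- The set of directions in which there is a crossing with pattern classes `(S, T)`. -/
def crossSet (S T : Finset (Fin K.n)) : Set E3 :=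
  {ξ : E3 | ∃ p q : E3, K.pat p = S ∧ K.pat q = T ∧ (p, q) ∈ K.crossingPairs ξ}

lemma tait_eq_sum (ξ : E3) :
    K.tait ξ = ∑ ST : Finset (Fin K.n) × Finset (Fin K.n),
      Set.indicator (K.crossSet ST.1 ST.2)
        (fun ξ' => Real.sign (det3 (K.dirClass ST.1) (K.dirClass ST.2) ξ')) ξ := by
  classical
  have hfin := K.support_finite ξ
  rw [tait, finsum_mem_eq_sum _ hfin]
  rw [← Finset.sum_fiberwise hfin.toFinset (fun z : E3 × E3 => (K.pat z.1, K.pat z.2))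
      (fun z => crossingSign ξ (K.dirAt z.1) (K.dirAt z.2))]
  refine Finset.sum_congr rfl ?_
  rintro ⟨S, T⟩ -
  by_cases hd : det3 (K.dirClass S) (K.dirClass T) ξ = 0
  · rw [Finset.sum_eq_zero, Set.indicator_apply]
    · split <;> simp [hd, Real.sign_zero]
    · rintro ⟨p, q⟩ hz
      simp only [Finset.mem_filter, Prod.mk.injEq] at hz
      obtain ⟨-, hS, hT⟩ := hz
      simp only [crossingSign, K.dirAt_eq_dirClass hS, K.dirAt_eq_dirClass hT, hd,
        Real.sign_zero]
  · by_cases hA : ξ ∈ K.crossSet S T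
    · obtain ⟨p, q, hpS, hqT, hpq⟩ := hA
      have hfil : hfin.toFinset.filter
          (fun z : E3 × E3 => (K.pat z.1, K.pat z.2) = (S, T)) = {(p, q)} := by
        apply Finset.eq_singleton_iff_unique_mem.2
        constructor
        · simp only [Finset.mem_filter, Set.Finite.mem_toFinset, Set.mem_inter_iff,
            Function.mem_support, Prod.mk.injEq]
          refine ⟨⟨hpq, ?_⟩, hpS, hqT⟩
          simp only [crossingSign, K.dirAt_eq_dirClass hpS, K.dirAt_eq_dirClass hqT]
          exact fun hc => hd (Real.sign_eq_zero_iff.1 hc)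
        · rintro ⟨a, b⟩ hz
          simp only [Finset.mem_filter, Set.Finite.mem_toFinset, Set.mem_inter_iff,
            Function.mem_support, Prod.mk.injEq] at hz
          obtain ⟨⟨hab, -⟩, haS, hbT⟩ := hz
          have hd' : det3 (K.dirAt a) (K.dirAt b) ξ ≠ 0 := by
            rw [K.dirAt_eq_dirClass haS, K.dirAt_eq_dirClass hbT]; exact hd
          obtain ⟨h1, h2⟩ := K.crossing_unique hab hpq (haS.trans hpS.symm)
            (hbT.trans hqT.symm) hd'
          simp [h1, h2]
      rw [hfil, Finset.sum_singleton, Set.indicator_of_mem (show ξ ∈ K.crossSet S T from ⟨p, q, hpS, hqT, hpq⟩)]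
      simp only [crossingSign, K.dirAt_eq_dirClass hpS, K.dirAt_eq_dirClass hqT]
    · have hfil : hfin.toFinset.filter
          (fun z : E3 × E3 => (K.pat z.1, K.pat z.2) = (S, T)) = ∅ := by
        apply Finset.eq_empty_of_forall_notMem
        rintro ⟨a, b⟩ hz
        simp only [Finset.mem_filter, Set.Finite.mem_toFinset, Set.mem_inter_iff,
          Function.mem_support, Prod.mk.injEq] at hz
        exact hA ⟨a, b, hz.2.1, hz.2.2, hz.1.1⟩
      rw [hfil, Finset.sum_empty, Set.indicator_of_notMem hA]

end PLKnot

end Aux2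

section Aux3

namespace PLKnot

variable (K : PLKnot)

/-- First kind of badness: a vertex shares a fiber with another point. -/
def bad1 (ξ : E3) : Prop :=
  ∃ p q : E3, p ∈ K.vertices ∧ q ∈ K.carrier ∧ p ≠ q ∧ proj ξ p = proj ξ q

/-- Second kind of badness: three distinct points in one fiber. -/
def bad2 (ξ : E3) : Prop :=
  ∃ p q r : E3, p ∈ K.carrier ∧ q ∈ K.carrier ∧ r ∈ K.carrier ∧
    p ≠ q ∧ p ≠ r ∧ q ≠ r ∧ proj ξ p = proj ξ q ∧ proj ξ p = proj ξ r

lemma mem_fiber {ξ y x : E3} : x ∈ K.fiber ξ y ↔ x ∈ K.carrier ∧ proj ξ x = proj ξ y :=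
  Iff.rfl

lemma not_good_iff (ξ : E3) : ¬K.IsGoodDir ξ ↔ K.bad1 ξ ∨ K.bad2 ξ := by
  constructor
  · intro h
    rw [IsGoodDir] at h
    push_neg at h
    obtain ⟨y, hne, hns, hnt⟩ := h
    obtain ⟨p, hp⟩ := hne
    obtain ⟨q, hq, hqp⟩ : ∃ q ∈ K.fiber ξ y, q ≠ p := by
      by_contra hc
      push_neg at hc
      exact hns p (Set.eq_singleton_iff_unique_mem.2 ⟨hp, hc⟩)
    by_cases hr : ∃ r ∈ K.fiber ξ y, r ≠ p ∧ r ≠ q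
    · obtain ⟨r, hrf, hrp, hrq⟩ := hr
      right
      exact ⟨p, q, r, hp.1, hq.1, hrf.1, Ne.symm hqp, Ne.symm hrp, Ne.symm hrq,
        hp.2.trans hq.2.symm, hp.2.trans hrf.2.symm⟩
    · push_neg at hr
      have hF : K.fiber ξ y = {p, q} := by
        apply Set.eq_of_subset_of_subset
        · intro x hx
          by_cases hxp : x = p
          · exact Or.inl hxp
          · by_cases hxq : x = q
            · exact Or.inr hxq
            · exact absurd hxq (not_not.2 (hr x hx hxp))
        · rintro x (rfl | rfl)
          · exact hp
          · exact hq
      have hni := hnt p q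
      have : ¬(p ≠ q ∧ p ∈ K.interiorPts ∧ q ∈ K.interiorPts ∧ K.fiber ξ y = {p, q}) :=
        fun hc => hni hc.1 hc.2.1 hc.2.2.1 hc.2.2.2
      have hpq : p ≠ q := Ne.symm hqp
      have : p ∉ K.interiorPts ∨ q ∉ K.interiorPts := by tauto
      left
      rcases this with hv | hv
      · have hpv : p ∈ K.vertices := by
          rcases Set.notMem_diff_of_mem (s := K.carrier) (t := K.vertices)  with h'
          · by_contra hcc
            exact hv ⟨hp.1, hcc⟩
        exact ⟨p, q, hpv, hq.1, hpq, hp.2.trans hq.2.symm⟩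
      · have hqv : q ∈ K.vertices := by
          by_contra hcc
          exact hv ⟨hq.1, hcc⟩
        exact ⟨q, p, hqv, hp.1, hpq.symm, hq.2.trans hp.2.symm⟩
  · intro h hgood
    rcases h with ⟨p, q, hpv, hqc, hpq, hproj⟩ | ⟨p, q, r, hpc, hqc, hrc, hpq, hpr, hqr, h1, h2⟩
    · have hpf : p ∈ K.fiber ξ p := ⟨K.vertices_subset_carrier hpv, rfl⟩
      have hqf : q ∈ K.fiber ξ p := ⟨hqc, hproj.symm⟩
      rcases hgood p with hemp | ⟨a, ha⟩ | ⟨a, b, hab, hai, hbi, hfab⟩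
      · rw [hemp] at hpf; exact hpf
      · rw [ha] at hpf hqf
        exact hpq (hpf.trans hqf.symm)
      · rw [hfab] at hpf hqf
        have hpint : p ∈ K.interiorPts := by
          rcases hpf with rfl | rfl
          · exact hai
          · exact hbi
        exact hpint.2 hpv
    · have hpf : p ∈ K.fiber ξ p := ⟨hpc, rfl⟩
      have hqf : q ∈ K.fiber ξ p := ⟨hqc, h1.symm⟩
      have hrf : r ∈ K.fiber ξ p := ⟨hrc, h2.symm⟩
      rcases hgood p with hemp | ⟨a, ha⟩ | ⟨a, b, hab, hai, hbi, hfab⟩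
      · rw [hemp] at hpf; exact hpf
      · rw [ha] at hpf hqf
        exact hpq (hpf.trans hqf.symm)
      · rw [hfab] at hpf hqf hrf
        rcases hpf with h1' | h1' <;> rcases hqf with h2' | h2' <;>
          rcases hrf with h3' | h3' <;>
          first
            | exact hpq (h1'.trans h2'.symm)
            | exact hpr (h1'.trans h3'.symm)
            | exact hqr (h2'.trans h3'.symm)

end PLKnot

end Aux3

section Aux4

open Function

lemma exists_sep_of_not_mem_closed {D : Set E3} (hD : IsClosed D) {p : E3} (hp : p ∉ D) :
    ∃ ε > 0, ∀ y ∈ D, ε ≤ dist p y := by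
  have hopen : IsOpen Dᶜ := hD.isOpen_compl
  obtain ⟨ε, hε, hball⟩ := Metric.isOpen_iff.1 hopen p hp
  refine ⟨ε, hε, fun y hy => ?_⟩
  by_contra hc
  push_neg at hc
  exact (hball (by rwa [Metric.mem_ball, dist_comm])) hy

lemma continuous_proj_fst : Continuous fun w : E3 × E3 × E3 => proj w.2.2 w.1 := by
  unfold proj
  exact continuous_fst.sub
    (((continuous_inner (𝕜 := ℝ)).comp (continuous_fst.prodMk (continuous_snd.comp continuous_snd))).smul
      (continuous_snd.comp continuous_snd))

lemma continuous_proj_snd : Continuous fun w : E3 × E3 × E3 => proj w.2.2 w.2.1 := by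
  unfold proj
  exact (continuous_fst.comp continuous_snd).sub
    (((continuous_inner (𝕜 := ℝ)).comp ((continuous_fst.comp continuous_snd).prodMk
      (continuous_snd.comp continuous_snd))).smul (continuous_snd.comp continuous_snd))

lemma isCompact_sphere2 : IsCompact sphere2 := isCompact_sphere 0 1

lemma isClosed_sphere2 : IsClosed sphere2 := Metric.isClosed_sphere

namespace PLKnot

variable (K : PLKnot)

lemma measurableSet_bad1 : MeasurableSet ({ξ : E3 | K.bad1 ξ} ∩ sphere2) := by
  have key : {ξ : E3 | K.bad1 ξ} ∩ sphere2 = ⋃ m : ℕ, (fun w : E3 × E3 × E3 => w.2.2) ''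
      {w : E3 × E3 × E3 | w.1 ∈ K.vertices ∧ w.2.1 ∈ K.carrier ∧
        1 / (m + 1 : ℝ) ≤ dist w.1 w.2.1 ∧ proj w.2.2 w.1 = proj w.2.2 w.2.1 ∧
        w.2.2 ∈ sphere2} := by
    ext ξ
    constructor
    · rintro ⟨⟨p, q, hpv, hqc, hpq, hproj⟩, hsph⟩
      have hd : (0 : ℝ) < dist p q := dist_pos.2 hpq
      obtain ⟨m, hm⟩ := exists_nat_one_div_lt hd
      exact Set.mem_iUnion.2 ⟨m, ⟨(p, q, ξ), ⟨hpv, hqc, hm.le, hproj, hsph⟩, rfl⟩⟩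
    · rintro hξ
      obtain ⟨m, ⟨w, ⟨hv, hc, hdist, hproj, hsph⟩, rfl⟩⟩ := Set.mem_iUnion.1 hξ
      have hpos : (0 : ℝ) < 1 / (m + 1 : ℝ) := by positivity
      refine ⟨⟨w.1, w.2.1, hv, hc, ?_, hproj⟩, hsph⟩
      intro hc'
      rw [hc'] at hdist
      simp only [dist_self] at hdist
      linarith
  rw [key]
  refine MeasurableSet.iUnion fun m => ?_
  have hclosed : IsClosed {w : E3 × E3 × E3 | w.1 ∈ K.vertices ∧ w.2.1 ∈ K.carrier ∧
      1 / (m + 1 : ℝ) ≤ dist w.1 w.2.1 ∧ proj w.2.2 w.1 = proj w.2.2 w.2.1 ∧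
      w.2.2 ∈ sphere2} := by
    refine IsClosed.inter (K.vertices_finite.isClosed.preimage continuous_fst) ?_
    refine IsClosed.inter (K.isCompact_carrier.isClosed.preimage
      (continuous_fst.comp continuous_snd)) ?_
    refine IsClosed.inter (isClosed_le continuous_const
      (continuous_fst.dist (continuous_fst.comp continuous_snd))) ?_
    refine IsClosed.inter (isClosed_eq continuous_proj_fst continuous_proj_snd) ?_
    exact isClosed_sphere2.preimage (continuous_snd.comp continuous_snd)
  have hcpt : IsCompact {w : E3 × E3 × E3 | w.1 ∈ K.vertices ∧ w.2.1 ∈ K.carrier ∧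
      1 / (m + 1 : ℝ) ≤ dist w.1 w.2.1 ∧ proj w.2.2 w.1 = proj w.2.2 w.2.1 ∧
      w.2.2 ∈ sphere2} := by
    refine IsCompact.of_isClosed_subset
      ((K.vertices_finite.isCompact).prod (K.isCompact_carrier.prod isCompact_sphere2))
      hclosed ?_
    rintro ⟨p, q, ξ⟩ ⟨h1, h2, -, -, h5⟩
    exact ⟨h1, h2, h5⟩
  exact ((hcpt.image (continuous_snd.comp continuous_snd)).isClosed).measurableSet

lemma measurableSet_bad2 : MeasurableSet ({ξ : E3 | K.bad2 ξ} ∩ sphere2) := by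
  have key : {ξ : E3 | K.bad2 ξ} ∩ sphere2 = ⋃ m : ℕ,
      (fun w : E3 × E3 × E3 × E3 => w.2.2.2) ''
      {w : E3 × E3 × E3 × E3 | w.1 ∈ K.carrier ∧ w.2.1 ∈ K.carrier ∧ w.2.2.1 ∈ K.carrier ∧
        1 / (m + 1 : ℝ) ≤ dist w.1 w.2.1 ∧ 1 / (m + 1 : ℝ) ≤ dist w.1 w.2.2.1 ∧
        1 / (m + 1 : ℝ) ≤ dist w.2.1 w.2.2.1 ∧
        proj w.2.2.2 w.1 = proj w.2.2.2 w.2.1 ∧ proj w.2.2.2 w.1 = proj w.2.2.2 w.2.2.1 ∧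
        w.2.2.2 ∈ sphere2} := by
    ext ξ
    constructor
    · rintro ⟨⟨p, q, r, hpc, hqc, hrc, hpq, hpr, hqr, h1, h2⟩, hsph⟩
      have hd : (0 : ℝ) < min (dist p q) (min (dist p r) (dist q r)) := by
        simp only [lt_min_iff]
        exact ⟨dist_pos.2 hpq, dist_pos.2 hpr, dist_pos.2 hqr⟩
      obtain ⟨m, hm⟩ := exists_nat_one_div_lt hd
      simp only [lt_min_iff] at hm
      exact Set.mem_iUnion.2 ⟨m, ⟨(p, q, r, ξ),
        ⟨hpc, hqc, hrc, hm.1.le, hm.2.1.le, hm.2.2.le, h1, h2, hsph⟩, rfl⟩⟩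
    · rintro hξ
      obtain ⟨m, ⟨w, ⟨h1, h2, h3, h4, h5, h6, h7, h8, hsph⟩, rfl⟩⟩ := Set.mem_iUnion.1 hξ
      have hpos : (0 : ℝ) < 1 / (m + 1 : ℝ) := by positivity
      have hne : ∀ a b : E3, 1 / (m + 1 : ℝ) ≤ dist a b → a ≠ b := by
        intro a b hab hc'
        rw [hc'] at hab
        simp only [dist_self] at hab
        linarith
      exact ⟨⟨w.1, w.2.1, w.2.2.1, h1, h2, h3, hne _ _ h4, hne _ _ h5, hne _ _ h6, h7, h8⟩, hsph⟩
  rw [key]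
  refine MeasurableSet.iUnion fun m => ?_
  set G : Set (E3 × E3 × E3 × E3) := {w : E3 × E3 × E3 × E3 |
    w.1 ∈ K.carrier ∧ w.2.1 ∈ K.carrier ∧ w.2.2.1 ∈ K.carrier ∧
    1 / (m + 1 : ℝ) ≤ dist w.1 w.2.1 ∧ 1 / (m + 1 : ℝ) ≤ dist w.1 w.2.2.1 ∧
    1 / (m + 1 : ℝ) ≤ dist w.2.1 w.2.2.1 ∧
    proj w.2.2.2 w.1 = proj w.2.2.2 w.2.1 ∧ proj w.2.2.2 w.1 = proj w.2.2.2 w.2.2.1 ∧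
    w.2.2.2 ∈ sphere2} with hG
  have c1 : Continuous fun w : E3 × E3 × E3 × E3 => w.1 := continuous_fst
  have c2 : Continuous fun w : E3 × E3 × E3 × E3 => w.2.1 := continuous_fst.comp continuous_snd
  have c3 : Continuous fun w : E3 × E3 × E3 × E3 => w.2.2.1 :=
    (continuous_fst.comp continuous_snd).comp continuous_snd
  have c4 : Continuous fun w : E3 × E3 × E3 × E3 => w.2.2.2 :=
    (continuous_snd.comp continuous_snd).comp continuous_snd
  have cproj : ∀ (f : E3 × E3 × E3 × E3 → E3), Continuous f →
      Continuous fun w : E3 × E3 × E3 × E3 => proj (w.2.2.2) (f w) := by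
    intro f hf
    unfold proj
    exact hf.sub (((continuous_inner (𝕜 := ℝ)).comp (hf.prodMk c4)).smul c4)
  have hclosed : IsClosed G := by
    rw [hG]
    refine IsClosed.inter (K.isCompact_carrier.isClosed.preimage c1) ?_
    refine IsClosed.inter (K.isCompact_carrier.isClosed.preimage c2) ?_
    refine IsClosed.inter (K.isCompact_carrier.isClosed.preimage c3) ?_
    refine IsClosed.inter (isClosed_le continuous_const (c1.dist c2)) ?_
    refine IsClosed.inter (isClosed_le continuous_const (c1.dist c3)) ?_
    refine IsClosed.inter (isClosed_le continuous_const (c2.dist c3)) ?_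
    refine IsClosed.inter (isClosed_eq (cproj _ c1) (cproj _ c2)) ?_
    refine IsClosed.inter (isClosed_eq (cproj _ c1) (cproj _ c3)) ?_
    exact isClosed_sphere2.preimage c4
  have hcpt : IsCompact G := by
    refine IsCompact.of_isClosed_subset
      (K.isCompact_carrier.prod (K.isCompact_carrier.prod
        (K.isCompact_carrier.prod isCompact_sphere2))) hclosed ?_
    rintro ⟨p, q, r, ξ⟩ ⟨h1, h2, h3, -, -, -, -, -, h9⟩
    exact ⟨h1, h2, h3, h9⟩
  exact ((hcpt.image c4).isClosed).measurableSet

end PLKnot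

end Aux4

section Aux5

open Function

namespace PLKnot

variable (K : PLKnot)

/-- The intersection of all segments indexed by `S`. -/
def core (S : Finset (Fin K.n)) : Set E3 := ⋂ j ∈ S, K.seg (j : ℤ)

/-- The union of all segments not indexed by `S`. -/
def rest (S : Finset (Fin K.n)) : Set E3 := ⋃ j ∈ Sᶜ, K.seg (j : ℤ)

lemma pat_eq_iff {p : E3} {S : Finset (Fin K.n)} :
    K.pat p = S ↔ p ∈ K.core S ∧ p ∉ K.rest S := by
  classical
  constructor
  · rintro rfl
    constructor
    · exact Set.mem_biInter fun j hj => K.mem_pat.1 hj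
    · intro hp
      obtain ⟨j, hj, hseg⟩ := Set.mem_iUnion₂.1 hp
      exact (Finset.mem_compl.1 hj) (K.mem_pat.2 hseg)
  · rintro ⟨hc, hr⟩
    ext j
    rw [K.mem_pat]
    constructor
    · intro hseg
      by_contra hj
      exact hr (Set.mem_iUnion₂.2 ⟨j, Finset.mem_compl.2 hj, hseg⟩)
    · intro hj
      exact (Set.mem_iInter₂.1 hc) j hj
  
lemma isClosed_rest (S : Finset (Fin K.n)) : IsClosed (K.rest S) := by
  apply Set.Finite.isClosed_biUnion (Set.toFinite _)
  exact fun j _ => K.isClosed_seg _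

lemma isCompact_core {S : Finset (Fin K.n)} (hS : S.Nonempty) : IsCompact (K.core S) := by
  obtain ⟨j0, hj0⟩ := hS
  refine IsCompact.of_isClosed_subset (K.isCompact_seg (j0 : ℤ)) ?_ ?_
  · exact isClosed_biInter fun j _ => K.isClosed_seg _
  · exact Set.biInter_subset_of_mem hj0

lemma crossSet_empty_left {T : Finset (Fin K.n)} : K.crossSet ∅ T = ∅ := by
  ext ξ
  simp only [crossSet, Set.mem_setOf_eq, Set.mem_empty_iff_false, iff_false]
  rintro ⟨p, q, hpS, -, hcp⟩
  obtain ⟨hpc, -, -, -, -⟩ := hcp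
  obtain ⟨j, hj⟩ := K.pat_nonempty hpc
  rw [hpS] at hj
  exact absurd hj (Finset.notMem_empty j)

lemma crossSet_empty_right {S : Finset (Fin K.n)} : K.crossSet S ∅ = ∅ := by
  ext ξ
  simp only [crossSet, Set.mem_setOf_eq, Set.mem_empty_iff_false, iff_false]
  rintro ⟨p, q, -, hqT, hcp⟩
  obtain ⟨-, hqc, -, -, -⟩ := hcp
  obtain ⟨j, hj⟩ := K.pat_nonempty hqc
  rw [hqT] at hj
  exact absurd hj (Finset.notMem_empty j)

lemma measurableSet_crossSet (S T : Finset (Fin K.n)) :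
    MeasurableSet (K.crossSet S T ∩ sphere2) := by
  rcases S.eq_empty_or_nonempty with rfl | hS
  · rw [K.crossSet_empty_left]
    simp
  rcases T.eq_empty_or_nonempty with rfl | hT
  · rw [K.crossSet_empty_right]
    simp
  have key : K.crossSet S T ∩ sphere2 = ⋃ m : ℕ, (fun w : E3 × E3 × E3 => w.2.2) ''
      {w : E3 × E3 × E3 | w.1 ∈ K.core S ∧ (∀ y ∈ K.rest S, 1 / (m + 1 : ℝ) ≤ dist w.1 y) ∧
        w.2.1 ∈ K.core T ∧ (∀ y ∈ K.rest T, 1 / (m + 1 : ℝ) ≤ dist w.2.1 y) ∧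
        proj w.2.2 w.1 = proj w.2.2 w.2.1 ∧
        ⟪w.2.1, w.2.2⟫_ℝ + 1 / (m + 1 : ℝ) ≤ ⟪w.1, w.2.2⟫_ℝ ∧ w.2.2 ∈ sphere2} := by
    ext ξ
    constructor
    · rintro ⟨⟨p, q, hpS, hqT, hcp⟩, hsph⟩
      obtain ⟨hpc, hqc, hne, hproj, hlt⟩ := hcp
      obtain ⟨hpcore, hprest⟩ := K.pat_eq_iff.1 hpS
      obtain ⟨hqcore, hqrest⟩ := K.pat_eq_iff.1 hqT
      obtain ⟨ε₁, hε₁, hsep₁⟩ := exists_sep_of_not_mem_closed (K.isClosed_rest S) hprest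
      obtain ⟨ε₂, hε₂, hsep₂⟩ := exists_sep_of_not_mem_closed (K.isClosed_rest T) hqrest
      have hε₃ : (0 : ℝ) < ⟪p, ξ⟫_ℝ - ⟪q, ξ⟫_ℝ := by
        simp only at hlt ⊢
        linarith
      have hmin : (0 : ℝ) < min ε₁ (min ε₂ (⟪p, ξ⟫_ℝ - ⟪q, ξ⟫_ℝ)) := by
        simp only [lt_min_iff]
        exact ⟨hε₁, hε₂, hε₃⟩
      obtain ⟨m, hm⟩ := exists_nat_one_div_lt hmin
      simp only [lt_min_iff] at hm
      refine Set.mem_iUnion.2 ⟨m, ⟨(p, q, ξ), ⟨hpcore, ?_, hqcore, ?_, hproj, ?_, hsph⟩, rfl⟩⟩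
      · exact fun y hy => le_trans hm.1.le (hsep₁ y hy)
      · exact fun y hy => le_trans hm.2.1.le (hsep₂ y hy)
      · simp only
        linarith [hm.2.2]
    · rintro hξ
      obtain ⟨m, ⟨w, ⟨h1, h2, h3, h4, h5, h6, hsph⟩, rfl⟩⟩ := Set.mem_iUnion.1 hξ
      have hpos : (0 : ℝ) < 1 / (m + 1 : ℝ) := by positivity
      obtain ⟨j0, hj0⟩ := hS
      obtain ⟨j1, hj1⟩ := hT
      refine ⟨⟨w.1, w.2.1, ?_, ?_, ?_, ?_, ?_, ?_, ?_⟩, hsph⟩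
      · exact K.pat_eq_iff.2 ⟨h1, fun hmem => by
          have := h2 w.1 hmem
          simp only [dist_self] at this
          linarith⟩
      · exact K.pat_eq_iff.2 ⟨h3, fun hmem => by
          have := h4 w.2.1 hmem
          simp only [dist_self] at this
          linarith⟩
      · exact K.mem_carrier_iff.2 ⟨(j0 : ℤ), (Set.mem_iInter₂.1 h1) j0 hj0⟩
      · exact K.mem_carrier_iff.2 ⟨(j1 : ℤ), (Set.mem_iInter₂.1 h3) j1 hj1⟩
      · intro hc'
        rw [hc'] at h6
        linarith
      · exact h5
      · simp only
        linarith
  rw [key]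
  refine MeasurableSet.iUnion fun m => ?_
  set G : Set (E3 × E3 × E3) := {w : E3 × E3 × E3 |
    w.1 ∈ K.core S ∧ (∀ y ∈ K.rest S, 1 / (m + 1 : ℝ) ≤ dist w.1 y) ∧
    w.2.1 ∈ K.core T ∧ (∀ y ∈ K.rest T, 1 / (m + 1 : ℝ) ≤ dist w.2.1 y) ∧
    proj w.2.2 w.1 = proj w.2.2 w.2.1 ∧
    ⟪w.2.1, w.2.2⟫_ℝ + 1 / (m + 1 : ℝ) ≤ ⟪w.1, w.2.2⟫_ℝ ∧ w.2.2 ∈ sphere2} with hG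
  have c1 : Continuous fun w : E3 × E3 × E3 => w.1 := continuous_fst
  have c2 : Continuous fun w : E3 × E3 × E3 => w.2.1 := continuous_fst.comp continuous_snd
  have c3 : Continuous fun w : E3 × E3 × E3 => w.2.2 := continuous_snd.comp continuous_snd
  have hccore : IsClosed (K.core S) := isClosed_biInter fun j _ => K.isClosed_seg _
  have hccoreT : IsClosed (K.core T) := isClosed_biInter fun j _ => K.isClosed_seg _
  have cinner1 : Continuous fun w : E3 × E3 × E3 => ⟪w.1, w.2.2⟫_ℝ :=
    continuous_inner.comp (c1.prodMk c3)
  have cinner2 : Continuous fun w : E3 × E3 × E3 => ⟪w.2.1, w.2.2⟫_ℝ :=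
    continuous_inner.comp (c2.prodMk c3)
  have hclosed : IsClosed G := by
    rw [hG]
    refine IsClosed.inter (hccore.preimage c1) ?_
    refine IsClosed.inter ?_ ?_
    · show IsClosed {w : E3 × E3 × E3 | ∀ y ∈ K.rest S, 1 / (m + 1 : ℝ) ≤ dist w.1 y}
      have heq : {w : E3 × E3 × E3 | ∀ y ∈ K.rest S, 1 / (m + 1 : ℝ) ≤ dist w.1 y} =
          ⋂ y ∈ K.rest S, {w : E3 × E3 × E3 | 1 / (m + 1 : ℝ) ≤ dist w.1 y} := by
        ext w
        simp
      rw [heq]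
      exact isClosed_biInter fun y _ =>
        isClosed_le continuous_const (c1.dist continuous_const)
    refine IsClosed.inter (hccoreT.preimage c2) ?_
    refine IsClosed.inter ?_ ?_
    · show IsClosed {w : E3 × E3 × E3 | ∀ y ∈ K.rest T, 1 / (m + 1 : ℝ) ≤ dist w.2.1 y}
      have heq : {w : E3 × E3 × E3 | ∀ y ∈ K.rest T, 1 / (m + 1 : ℝ) ≤ dist w.2.1 y} =
          ⋂ y ∈ K.rest T, {w : E3 × E3 × E3 | 1 / (m + 1 : ℝ) ≤ dist w.2.1 y} := by
        ext w
        simp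
      rw [heq]
      exact isClosed_biInter fun y _ =>
        isClosed_le continuous_const (c2.dist continuous_const)
    refine IsClosed.inter (isClosed_eq continuous_proj_fst continuous_proj_snd) ?_
    refine IsClosed.inter ?_ (isClosed_sphere2.preimage c3)
    show IsClosed {w : E3 × E3 × E3 |
      ⟪w.2.1, w.2.2⟫_ℝ + 1 / (m + 1 : ℝ) ≤ ⟪w.1, w.2.2⟫_ℝ}
    exact isClosed_le (cinner2.add continuous_const) cinner1
  have hcpt : IsCompact G := by
    refine IsCompact.of_isClosed_subset
      ((K.isCompact_core hS).prod ((K.isCompact_core hT).prod isCompact_sphere2)) hclosed ?_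
    rintro ⟨p, q, ξ⟩ ⟨h1, -, h3, -, -, -, h7⟩
    exact ⟨h1, h3, h7⟩
  exact ((hcpt.image c3).isClosed).measurableSet

end PLKnot

end Aux5

section Aux6

open Function

lemma measurable_real_sign : Measurable Real.sign := by
  have heq : Real.sign = fun r : ℝ => if r < 0 then (-1 : ℝ) else if 0 < r then 1 else 0 := by
    funext r
    rcases lt_trichotomy r 0 with h | h | h
    · rw [Real.sign_of_neg h, if_pos h]
    · subst h
      rw [Real.sign_zero, if_neg (lt_irrefl _), if_neg (lt_irrefl _)]
    · rw [Real.sign_of_pos h, if_neg (not_lt.2 h.le), if_pos h]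
  rw [heq]
  refine Measurable.ite (measurableSet_lt measurable_id measurable_const) measurable_const ?_
  exact Measurable.ite (measurableSet_lt measurable_const measurable_id)
    measurable_const measurable_const

lemma continuous_det3 (u w : E3) : Continuous fun ξ : E3 => det3 u w ξ := by
  have heq : (fun ξ : E3 => det3 u w ξ) = fun ξ : E3 =>
      u 0 * (w 1 * ξ 2 - w 2 * ξ 1) - u 1 * (w 0 * ξ 2 - w 2 * ξ 0) +
        u 2 * (w 0 * ξ 1 - w 1 * ξ 0) := by
    funext ξ
    simp [det3, Matrix.det_fin_three]
    ring
  rw [heq]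
  have happ : ∀ i : Fin 3, Continuous fun ξ : E3 => ξ i := by
    intro i
    exact (EuclideanSpace.proj i : E3 →L[ℝ] ℝ).continuous
  fun_prop

lemma abs_real_sign_le (x : ℝ) : |Real.sign x| ≤ 1 := by
  rcases Real.sign_apply_eq x with h | h | h <;> rw [h] <;> norm_num

namespace PLKnot

variable (K : PLKnot)

lemma taitExt_abs_le (ξ : E3) :
    |K.taitExt ξ| ≤ (Fintype.card (Finset (Fin K.n) × Finset (Fin K.n)) : ℝ) := by
  classical
  have hcard : (0 : ℝ) ≤ (Fintype.card (Finset (Fin K.n) × Finset (Fin K.n)) : ℝ) := by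
    positivity
  rw [taitExt]
  split
  · rw [K.tait_eq_sum ξ]
    refine le_trans (Finset.abs_sum_le_sum_abs _ _) ?_
    rw [← Finset.card_univ]
    refine le_trans (Finset.sum_le_card_nsmul _ _ 1 ?_) ?_
    · intro ST _
      rw [Set.indicator_apply]
      split
      · exact abs_real_sign_le _
      · simp
    · simp
  · simp [hcard]

end PLKnot

end Aux6

/-- Let `K` be a PL knot in ℝ³, and extend the Tait number to a
function `T_K : S² → ℝ` by setting `T_K(ξ) = 0` for `ξ ∉ O_K`. Then `T_K` is integrable
on S² with respect to the spherical surface measure. -/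
theorem tait_integrable (K : PLKnot) (hK : K.IsKnot) :
    MeasureTheory.Integrable (fun ξ : Metric.sphere (0 : E3) 1 => K.taitExt ξ)
      sphMeasure := by
  classical
  set C : ℝ := (Fintype.card (Finset (Fin K.n) × Finset (Fin K.n)) : ℝ) with hC
  have hgood_meas : MeasurableSet {ξ : Metric.sphere (0 : E3) 1 | K.IsGoodDir ↑ξ} := by
    have hcompl : {ξ : Metric.sphere (0 : E3) 1 | K.IsGoodDir ↑ξ} =
        (Subtype.val ⁻¹' (({ξ : E3 | K.bad1 ξ} ∩ sphere2) ∪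
          ({ξ : E3 | K.bad2 ξ} ∩ sphere2)))ᶜ := by
      ext ξ
      have hs : (ξ : E3) ∈ sphere2 := ξ.2
      simp only [Set.mem_setOf_eq, Set.mem_compl_iff, Set.mem_preimage, Set.mem_union,
        Set.mem_inter_iff, hs, and_true]
      constructor
      · exact fun h hbad => (K.not_good_iff _).mpr hbad h
      · intro h
        by_contra hng
        exact h ((K.not_good_iff _).mp hng)
    rw [hcompl]
    exact ((K.measurableSet_bad1.union K.measurableSet_bad2).preimage
      measurable_subtype_coe).compl
  have hF_meas : Measurable fun ξ : Metric.sphere (0 : E3) 1 =>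
      ∑ ST : Finset (Fin K.n) × Finset (Fin K.n),
        Set.indicator (K.crossSet ST.1 ST.2 ∩ sphere2)
          (fun ξ' => Real.sign (det3 (K.dirClass ST.1) (K.dirClass ST.2) ξ')) ↑ξ := by
    refine Finset.measurable_sum _ fun ST _ => ?_
    have heq : (fun ξ : Metric.sphere (0 : E3) 1 =>
        Set.indicator (K.crossSet ST.1 ST.2 ∩ sphere2)
          (fun ξ' => Real.sign (det3 (K.dirClass ST.1) (K.dirClass ST.2) ξ')) ↑ξ) =
        Set.indicator (Subtype.val ⁻¹' (K.crossSet ST.1 ST.2 ∩ sphere2))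
          ((fun ξ' => Real.sign (det3 (K.dirClass ST.1) (K.dirClass ST.2) ξ')) ∘
            Subtype.val) := by
      funext x
      exact (Set.indicator_comp_right Subtype.val).symm
    rw [heq]
    refine Measurable.indicator ?_
      ((K.measurableSet_crossSet ST.1 ST.2).preimage measurable_subtype_coe)
    exact (measurable_real_sign.comp (continuous_det3 _ _).measurable).comp
      measurable_subtype_coe
  have hrep : (fun ξ : Metric.sphere (0 : E3) 1 => K.taitExt ↑ξ) =
      Set.indicator {ξ : Metric.sphere (0 : E3) 1 | K.IsGoodDir ↑ξ}
        (fun ξ : Metric.sphere (0 : E3) 1 =>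
          ∑ ST : Finset (Fin K.n) × Finset (Fin K.n),
            Set.indicator (K.crossSet ST.1 ST.2 ∩ sphere2)
              (fun ξ' => Real.sign (det3 (K.dirClass ST.1) (K.dirClass ST.2) ξ')) ↑ξ) := by
    funext ξ
    by_cases hg : K.IsGoodDir ↑ξ
    · rw [Set.indicator_of_mem (show ξ ∈ {ξ : Metric.sphere (0 : E3) 1 | K.IsGoodDir ↑ξ}
        from hg), PLKnot.taitExt, if_pos hg, K.tait_eq_sum]
      refine Finset.sum_congr rfl fun ST _ => ?_
      have hs : (ξ : E3) ∈ sphere2 := ξ.2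
      rw [Set.indicator_apply, Set.indicator_apply]
      simp only [Set.mem_inter_iff, hs, and_true]
    · rw [Set.indicator_of_notMem (show ξ ∉ {ξ : Metric.sphere (0 : E3) 1 | K.IsGoodDir ↑ξ}
        from hg), PLKnot.taitExt, if_neg hg]
  haveI : IsFiniteMeasure sphMeasure := by unfold sphMeasure; infer_instance
  refine (integrable_const C).mono' ?_ ?_
  · rw [hrep]
    exact (hF_meas.indicator hgood_meas).aestronglyMeasurable
  · refine Filter.Eventually.of_forall fun ξ => ?_
    rw [Real.norm_eq_abs]
    exact K.taitExt_abs_le _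
end
end
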